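/- If H is a home-base hypergraph with home-base partition (𝓕, 𝓡, W), then for every pair of distinct indices i, j ∈ {1, 2, 3}, the i-heavy (i, j)-cover of H is a vertex cover of H of size 2ν(H) = τ(H), and hence a minimum vertex cover of H. -/

import Mathlib

noncomputable section

attribute [local instance] Classical.propDecidable

universe u

variable {α : Type u}

/-- A 3-partite 3-uniform multihypergraph: vertex classes `V1, V2, V3` and a
multiset of edges, each edge being a triple with one vertex in each class
(parallel edges are allowed via multiplicities). -/
structure TriSys (α : Type u) where
  V1 : Finset α
  V2 : Finset α
  V3 : Finset α
  h12 : Disjoint V1 V2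
  h13 : Disjoint V1 V3
  h23 : Disjoint V2 V3
  edges : Multiset (α × α × α)
  mem1 : ∀ e ∈ edges, e.1 ∈ V1
  mem2 : ∀ e ∈ edges, e.2.1 ∈ V2
  mem3 : ∀ e ∈ edges, e.2.2 ∈ V3

/-- The vertex set of an edge. -/
def evset (e : α × α × α) : Finset α := {e.1, e.2.1, e.2.2}

/-- The coordinates of an edge, indexed by `Fin 3`. -/
def ecoord (e : α × α × α) : Fin 3 → α := ![e.1, e.2.1, e.2.2]

namespace TriSys

def verts (H : TriSys α) : Finset α := H.V1 ∪ H.V2 ∪ H.V3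

/-- The vertex classes, indexed by `Fin 3`. -/
def cls (H : TriSys α) : Fin 3 → Finset α := ![H.V1, H.V2, H.V3]

/-- A matching: a set of (pairwise vertex-disjoint) edges. -/
def IsMatching (H : TriSys α) (M : Finset (α × α × α)) : Prop :=
  (∀ e ∈ M, e ∈ H.edges) ∧
  (↑M : Set (α × α × α)).Pairwise fun e f => Disjoint (evset e) (evset f)

/-- The matching number ν. -/
def nu (H : TriSys α) : ℕ :=
  sSup {n : ℕ | ∃ M : Finset (α × α × α), H.IsMatching M ∧ M.card = n}

/-- A vertex cover: a set of vertices meeting every edge. -/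
def IsCover (H : TriSys α) (T : Finset α) : Prop :=
  ∀ e ∈ H.edges, ∃ v ∈ T, v ∈ evset e

/-- The vertex cover number τ. -/
def tau (H : TriSys α) : ℕ :=
  sInf {n : ℕ | ∃ T : Finset α, H.IsCover T ∧ T.card = n}

/-- Deletion of a set of vertices (and all edges meeting it). -/
def delete (H : TriSys α) (S : Finset α) : TriSys α where
  V1 := H.V1 \ S
  V2 := H.V2 \ S
  V3 := H.V3 \ S
  h12 := H.h12.mono Finset.sdiff_subset Finset.sdiff_subset
  h13 := H.h13.mono Finset.sdiff_subset Finset.sdiff_subset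
  h23 := H.h23.mono Finset.sdiff_subset Finset.sdiff_subset
  edges := H.edges.filter fun e => e.1 ∉ S ∧ e.2.1 ∉ S ∧ e.2.2 ∉ S
  mem1 := fun e he => by
    rw [Multiset.mem_filter] at he
    exact Finset.mem_sdiff.mpr ⟨H.mem1 e he.1, he.2.1⟩
  mem2 := fun e he => by
    rw [Multiset.mem_filter] at he
    exact Finset.mem_sdiff.mpr ⟨H.mem2 e he.1, he.2.2.1⟩
  mem3 := fun e he => by
    rw [Multiset.mem_filter] at he
    exact Finset.mem_sdiff.mpr ⟨H.mem3 e he.1, he.2.2.2⟩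

end TriSys

/-- The four edges of a truncated Fano plane on vertices `a,b,c,x,y,z`
(with classes `{a,x} ⊆ V1`, `{b,y} ⊆ V2`, `{c,z} ⊆ V3`). -/
def FanoEdges (a b c x y z : α) : Finset (α × α × α) :=
  {(a, b, c), (a, y, z), (x, b, z), (x, y, c)}

/-- The supports of the edges of `H` induced on a vertex subset `F`. -/
def inducedEdges (H : TriSys α) (F : Finset α) : Finset (α × α × α) :=
  (H.edges.filter fun e => evset e ⊆ F).toFinset

/-- `H` induces a truncated multi-Fano plane on the six-element set `F`. -/
def IsMultiFano (H : TriSys α) (F : Finset α) : Prop :=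
  ∃ a b c x y z : α,
    a ∈ H.V1 ∧ x ∈ H.V1 ∧ b ∈ H.V2 ∧ y ∈ H.V2 ∧ c ∈ H.V3 ∧ z ∈ H.V3 ∧
    a ≠ x ∧ b ≠ y ∧ c ≠ z ∧
    F = {a, b, c, x, y, z} ∧
    inducedEdges H F = FanoEdges a b c x y z

/-- The data of an FR-partition: the families `𝓕` and `𝓡` and the set `W`. -/
structure FRData (α : Type u) where
  Ffam : Finset (Finset α)
  Rfam : Finset (Finset α)
  W : Finset α

/-- The union of the members of a family of sets. -/
def famUnion (G : Finset (Finset α)) : Finset α := G.biUnion id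

/-- `(𝓕, 𝓡, W)` is an FR-partition of `H`. -/
def IsFRPartition (H : TriSys α) (P : FRData α) : Prop :=
  (∀ A ∈ P.Ffam, ∀ B ∈ P.Ffam, A ≠ B → Disjoint A B) ∧
  (∀ A ∈ P.Rfam, ∀ B ∈ P.Rfam, A ≠ B → Disjoint A B) ∧
  (∀ A ∈ P.Ffam, ∀ B ∈ P.Rfam, Disjoint A B) ∧
  (∀ A ∈ P.Ffam, Disjoint A P.W) ∧
  (∀ B ∈ P.Rfam, Disjoint B P.W) ∧
  famUnion P.Ffam ∪ famUnion P.Rfam ∪ P.W = H.verts ∧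
  (∀ A ∈ P.Ffam, IsMultiFano H A) ∧
  (∀ B ∈ P.Rfam, ∃ r1 ∈ H.V1, ∃ r2 ∈ H.V2, ∃ r3 ∈ H.V3, B = {r1, r2, r3}) ∧
  P.Ffam.card + P.Rfam.card = H.nu

/-- `w` is joined to `R` in the auxiliary bipartite graph `B_i`: some edge of
`H` contains `w` and two vertices of `R`. -/
def RAdj (H : TriSys α) (R : Finset α) (w : α) : Prop :=
  ∃ e ∈ H.edges, w ∈ evset e ∧ 2 ≤ (evset e ∩ R).card

/-- The auxiliary bipartite graph on `Rfam` and `Wi` has a matching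
saturating `Rfam`. -/
def SaturatingR (H : TriSys α) (Rfam : Finset (Finset α)) (Wi : Finset α) : Prop :=
  ∃ f : Finset α → α, Set.InjOn f ↑Rfam ∧ ∀ R ∈ Rfam, f R ∈ Wi ∧ RAdj H R (f R)

/-- Matchability of an FR-partition. -/
def IsMatchable (H : TriSys α) (P : FRData α) : Prop :=
  ∀ i : Fin 3, SaturatingR H P.Rfam (P.W ∩ H.cls i)

/-- The edge-home property: every edge is an `F`-edge or an `R`-edge. -/
def EdgeHome (H : TriSys α) (P : FRData α) : Prop :=
  ∀ e ∈ H.edges,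
    (∃ A ∈ P.Ffam, evset e ⊆ A) ∨ (∃ B ∈ P.Rfam, 2 ≤ (evset e ∩ B).card)

/-- A home-base partition: a matchable FR-partition with the edge-home
property. -/
def IsHomeBasePartition (H : TriSys α) (P : FRData α) : Prop :=
  IsFRPartition H P ∧ IsMatchable H P ∧ EdgeHome H P

/-- A home-base hypergraph: one admitting a home-base partition. -/
def IsHomeBase (H : TriSys α) : Prop :=
  ∃ P : FRData α, IsHomeBasePartition H P

/-- The neighborhood of a family `U` of `R`'s in the auxiliary bipartite
graph with `W`-side `Wi`. -/
def RNbhd (H : TriSys α) (Wi : Finset α) (U : Finset (Finset α)) : Finset α :=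
  Wi.filter fun w => ∃ R ∈ U, RAdj H R w

/-- `C` is an essential subset of `Wi` in the auxiliary bipartite graph:
`C = N(U)` for some `U ⊆ Rfam` with `|U| = |C|`. -/
def EssentialSet (H : TriSys α) (Rfam : Finset (Finset α)) (Wi : Finset α)
    (C : Finset α) : Prop :=
  ∃ U ⊆ Rfam, U.card = C.card ∧ RNbhd H Wi U = C

/-- `w` is a superfluous vertex of `Wi`: it lies in no essential subset
(equivalently, outside the maximal essential subset). -/
def Superfluous (H : TriSys α) (Rfam : Finset (Finset α)) (Wi : Finset α)
    (w : α) : Prop :=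
  w ∈ Wi ∧ ∀ C, EssentialSet H Rfam Wi C → w ∉ C

/-- `w` is a superfluous `W`-vertex of the FR-partition `P` (in its class). -/
def SuperfluousVert (H : TriSys α) (P : FRData α) (w : α) : Prop :=
  ∃ i : Fin 3, Superfluous H P.Rfam (P.W ∩ H.cls i) w

/-- `v` is an essential `W`-vertex of the FR-partition `P`. -/
def EssentialVertIn (H : TriSys α) (P : FRData α) (v : α) : Prop :=
  ∃ i : Fin 3, EssentialSet H P.Rfam (P.W ∩ H.cls i) {v}

/-- `v` is essential for `R`: it is the unique neighbor of `R` in some `B_i`. -/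
def EssentialForIn (H : TriSys α) (P : FRData α) (R : Finset α) (v : α) : Prop :=
  ∃ i : Fin 3, RNbhd H (P.W ∩ H.cls i) {R} = {v}

/-- The neighborhood, inside vertex class `j`, of a set `X` of class-`k`
vertices in the link graph of `H` over the remaining vertex class. -/
def nbr (H : TriSys α) (j k : Fin 3) (X : Finset α) : Finset α :=
  (H.cls j).filter fun v => ∃ e ∈ H.edges, ecoord e j = v ∧ ecoord e k ∈ X

/-- A cromulent triple `(Y1, Y2, X)` with `Y1 ⊆ V_i`, `Y2 ⊆ V_j`, `X ⊆ V_k`. -/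
def IsCromulent (H : TriSys α) (i j k : Fin 3) (Y1 Y2 X : Finset α) : Prop :=
  i ≠ j ∧ i ≠ k ∧ j ≠ k ∧
  Y1.Nonempty ∧ Y2.Nonempty ∧ X.Nonempty ∧
  Y1 ⊆ H.cls i ∧ Y2 ⊆ H.cls j ∧ X ⊆ H.cls k ∧
  Y1.card = Y2.card ∧ Y1.card ≤ X.card ∧
  nbr H j k X = Y2 ∧
  (∃ M : Finset (α × α × α), H.IsMatching M ∧ M.card = Y1.card ∧
    ∀ e ∈ M, evset e ⊆ Y1 ∪ Y2 ∪ X) ∧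
  IsHomeBase (H.delete (Y1 ∪ Y2 ∪ X)) ∧
  (H.delete (Y1 ∪ Y2 ∪ X)).nu + Y1.card = H.nu ∧
  ∀ P : FRData α, IsHomeBasePartition (H.delete (Y1 ∪ Y2 ∪ X)) P →
    nbr H i k X ⊆ Y1 ∪ famUnion P.Rfam ∪ famUnion P.Ffam

/-- A perfectly cromulent triple: condition (5) is strengthened to
`N_{Lk_{V_j}}(X) = Y1`. -/
def IsPerfCromulent (H : TriSys α) (i j k : Fin 3) (Y1 Y2 X : Finset α) : Prop :=
  i ≠ j ∧ i ≠ k ∧ j ≠ k ∧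
  Y1.Nonempty ∧ Y2.Nonempty ∧ X.Nonempty ∧
  Y1 ⊆ H.cls i ∧ Y2 ⊆ H.cls j ∧ X ⊆ H.cls k ∧
  Y1.card = Y2.card ∧ Y1.card ≤ X.card ∧
  nbr H j k X = Y2 ∧
  (∃ M : Finset (α × α × α), H.IsMatching M ∧ M.card = Y1.card ∧
    ∀ e ∈ M, evset e ⊆ Y1 ∪ Y2 ∪ X) ∧
  IsHomeBase (H.delete (Y1 ∪ Y2 ∪ X)) ∧
  (H.delete (Y1 ∪ Y2 ∪ X)).nu + Y1.card = H.nu ∧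
  nbr H i k X = Y1

/-- The link graph of `H` over the class other than `j, k` has a perfect
matching, encoded as a bijection from class `j` onto class `k` realized by
edges of `H`. -/
def LinkPerfectMatching (H : TriSys α) (j k : Fin 3) : Prop :=
  ∃ f : α → α, Set.InjOn f ↑(H.cls j) ∧ (H.cls j).image f = H.cls k ∧
    ∀ v ∈ H.cls j, ∃ e ∈ H.edges, ecoord e j = v ∧ ecoord e k = f v

/-- A proper FR-partition: no `R ∈ 𝓡` together with an edge consisting of
three `W`-vertices induces a truncated (multi-)Fano plane. -/
def IsProper (H : TriSys α) (P : FRData α) : Prop :=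
  ¬ ∃ R ∈ P.Rfam, ∃ e ∈ H.edges, evset e ⊆ P.W ∧ IsMultiFano H (R ∪ evset e)

section Aux
variable {α : Type u}

lemma cls_disjoint (H : TriSys α) {i j : Fin 3} (h : i ≠ j) :
    Disjoint (H.cls i) (H.cls j) := by
  fin_cases i <;> fin_cases j <;>
    first
      | exact absurd rfl h
      | simpa [TriSys.cls] using H.h12
      | simpa [TriSys.cls] using H.h13
      | simpa [TriSys.cls] using H.h23
      | simpa [TriSys.cls] using H.h12.symm
      | simpa [TriSys.cls] using H.h13.symm
      | simpa [TriSys.cls] using H.h23.symm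

lemma ecoord_mem_cls (H : TriSys α) {e : α × α × α} (he : e ∈ H.edges) (i : Fin 3) :
    ecoord e i ∈ H.cls i := by
  fin_cases i
  · simpa [ecoord, TriSys.cls] using H.mem1 e he
  · simpa [ecoord, TriSys.cls] using H.mem2 e he
  · simpa [ecoord, TriSys.cls] using H.mem3 e he

lemma ecoord_mem_evset (e : α × α × α) (i : Fin 3) : ecoord e i ∈ evset e := by
  fin_cases i <;> simp [ecoord, evset]

lemma mem_evset_iff {e : α × α × α} {v : α} : v ∈ evset e ↔ ∃ i, ecoord e i = v := by
  constructor
  · intro hv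
    simp only [evset, Finset.mem_insert, Finset.mem_singleton] at hv
    rcases hv with h | h | h
    · exact ⟨0, h.symm⟩
    · exact ⟨1, h.symm⟩
    · exact ⟨2, h.symm⟩
  · rintro ⟨i, rfl⟩; exact ecoord_mem_evset e i

lemma ecoord_ne (H : TriSys α) {e : α × α × α} (he : e ∈ H.edges) {i j : Fin 3}
    (h : i ≠ j) : ecoord e i ≠ ecoord e j := fun hh =>
  (Finset.disjoint_left.1 (cls_disjoint H h)) (ecoord_mem_cls H he i)
    (hh ▸ ecoord_mem_cls H he j)

lemma eq_ecoord_of_mem_cls (H : TriSys α) {e : α × α × α} (he : e ∈ H.edges)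
    {v : α} (hv : v ∈ evset e) {i : Fin 3} (hi : v ∈ H.cls i) : v = ecoord e i := by
  obtain ⟨m, rfl⟩ := mem_evset_iff.1 hv
  by_contra hne
  have hmi : m ≠ i := fun h => hne (by rw [h])
  exact (Finset.disjoint_left.1 (cls_disjoint H hmi)) (ecoord_mem_cls H he m) hi

lemma evset_card (H : TriSys α) {e : α × α × α} (he : e ∈ H.edges) :
    (evset e).card = 3 := by
  have h01 : e.1 ≠ e.2.1 := ecoord_ne H he (i := 0) (j := 1) (by decide)
  have h02 : e.1 ≠ e.2.2 := ecoord_ne H he (i := 0) (j := 2) (by decide)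
  have h12 : e.2.1 ≠ e.2.2 := ecoord_ne H he (i := 1) (j := 2) (by decide)
  simp [evset, h01, h02, h12]

lemma inter_card_le_one (H : TriSys α) {e : α × α × α} (he : e ∈ H.edges)
    {R : Finset α} {i j : Fin 3} (hij : i ≠ j)
    (hi : ecoord e i ∉ R) (hj : ecoord e j ∉ R) : (evset e ∩ R).card ≤ 1 := by
  have hsub : evset e ∩ R ⊆ evset e \ {ecoord e i, ecoord e j} := by
    intro u hu
    rw [Finset.mem_inter] at hu
    rw [Finset.mem_sdiff]
    refine ⟨hu.1, ?_⟩
    simp only [Finset.mem_insert, Finset.mem_singleton]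
    rintro (rfl | rfl)
    · exact hi hu.2
    · exact hj hu.2
  have hps : ({ecoord e i, ecoord e j} : Finset α) ⊆ evset e := by
    intro u hu
    simp only [Finset.mem_insert, Finset.mem_singleton] at hu
    rcases hu with rfl | rfl <;> exact ecoord_mem_evset e _
  calc (evset e ∩ R).card ≤ (evset e \ {ecoord e i, ecoord e j}).card :=
        Finset.card_le_card hsub
    _ = (evset e).card - ({ecoord e i, ecoord e j} : Finset α).card :=
        Finset.card_sdiff_of_subset hps
    _ ≤ 1 := by
        rw [evset_card H he, Finset.card_pair (ecoord_ne H he hij)]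

lemma nonR_unique (H : TriSys α) {e : α × α × α} (he : e ∈ H.edges)
    {R : Finset α} (h2 : 2 ≤ (evset e ∩ R).card)
    {u w : α} (hu : u ∈ evset e) (hunr : u ∉ R)
    (hw : w ∈ evset e) (hwnr : w ∉ R) : u = w := by
  obtain ⟨m, rfl⟩ := mem_evset_iff.1 hu
  obtain ⟨m', rfl⟩ := mem_evset_iff.1 hw
  by_contra hne
  have hmm : m ≠ m' := fun h => hne (by rw [h])
  exact absurd h2 (by simpa using Nat.lt_of_le_of_lt (inter_card_le_one H he hmm hunr hwnr) (by norm_num : 1 < 2))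

lemma mem_famUnion {G : Finset (Finset α)} {x : α} :
    x ∈ famUnion G ↔ ∃ A ∈ G, x ∈ A := by simp [famUnion]

end Aux

section Aux2
variable {α : Type u}

lemma rvec_mem_triple (r1 r2 r3 : α) (m : Fin 3) :
    ![r1,r2,r3] m ∈ ({r1,r2,r3} : Finset α) := by
  fin_cases m <;> simp

lemma rvec_mem_cls (H : TriSys α) {r1 r2 r3 : α} (h1 : r1 ∈ H.V1) (h2 : r2 ∈ H.V2)
    (h3 : r3 ∈ H.V3) (m : Fin 3) : ![r1,r2,r3] m ∈ H.cls m := by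
  fin_cases m
  · simpa [TriSys.cls] using h1
  · simpa [TriSys.cls] using h2
  · simpa [TriSys.cls] using h3

lemma rvec_ne (H : TriSys α) {r1 r2 r3 : α} (h1 : r1 ∈ H.V1) (h2 : r2 ∈ H.V2)
    (h3 : r3 ∈ H.V3) {m m' : Fin 3} (h : m ≠ m') :
    ![r1,r2,r3] m ≠ ![r1,r2,r3] m' := fun hh =>
  (Finset.disjoint_left.1 (cls_disjoint H h)) (rvec_mem_cls H h1 h2 h3 m)
    (hh ▸ rvec_mem_cls H h1 h2 h3 m')

lemma triple_card (H : TriSys α) {r1 r2 r3 : α} (h1 : r1 ∈ H.V1) (h2 : r2 ∈ H.V2)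
    (h3 : r3 ∈ H.V3) : ({r1,r2,r3} : Finset α).card = 3 := by
  have a : r1 ≠ r2 := rvec_ne H h1 h2 h3 (m := 0) (m' := 1) (by decide)
  have b : r1 ≠ r3 := rvec_ne H h1 h2 h3 (m := 0) (m' := 2) (by decide)
  have c : r2 ≠ r3 := rvec_ne H h1 h2 h3 (m := 1) (m' := 2) (by decide)
  rw [Finset.card_insert_of_notMem (by simp [a, b]),
    Finset.card_insert_of_notMem (by simp [c]), Finset.card_singleton]

lemma mem_triple_cls (H : TriSys α) {r1 r2 r3 u : α} (h1 : r1 ∈ H.V1)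
    (h2 : r2 ∈ H.V2) (h3 : r3 ∈ H.V3) {m : Fin 3}
    (hu : u ∈ ({r1,r2,r3} : Finset α)) (hcls : u ∈ H.cls m) : u = ![r1,r2,r3] m := by
  simp only [Finset.mem_insert, Finset.mem_singleton] at hu
  have key : ∀ m' : Fin 3, u = ![r1,r2,r3] m' → u = ![r1,r2,r3] m := by
    intro m' hm'
    rcases eq_or_ne m' m with rfl | hne
    · exact hm'
    · exact absurd hcls (fun hc => (Finset.disjoint_left.1 (cls_disjoint H hne))
        (by rw [hm'] at hc ⊢; exact rvec_mem_cls H h1 h2 h3 m') hc)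
  rcases hu with rfl | rfl | rfl
  · exact key 0 rfl
  · exact key 1 rfl
  · exact key 2 rfl

lemma triple_inter_cls (H : TriSys α) {r1 r2 r3 : α} (h1 : r1 ∈ H.V1)
    (h2 : r2 ∈ H.V2) (h3 : r3 ∈ H.V3) (m : Fin 3) :
    ({r1,r2,r3} : Finset α) ∩ H.cls m = {![r1,r2,r3] m} := by
  ext u
  simp only [Finset.mem_inter, Finset.mem_singleton]
  constructor
  · rintro ⟨hu, hc⟩; exact mem_triple_cls H h1 h2 h3 hu hc
  · rintro rfl; exact ⟨rvec_mem_triple r1 r2 r3 m, rvec_mem_cls H h1 h2 h3 m⟩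

lemma multiFano_inter_card (H : TriSys α) {F : Finset α} (hF : IsMultiFano H F)
    (m : Fin 3) : (F ∩ H.cls m).card = 2 := by
  obtain ⟨a, b, c, x, y, z, ha, hx, hb, hy, hc, hz, hax, hby, hcz, hFe, hind⟩ := hF
  subst hFe
  fin_cases m
  · have he : ({a,b,c,x,y,z} : Finset α) ∩ H.V1 = {a,x} := by
      ext u
      simp only [Finset.mem_inter, Finset.mem_insert, Finset.mem_singleton]
      constructor
      · rintro ⟨(rfl|rfl|rfl|rfl|rfl|rfl), hu⟩
        · exact Or.inl rfl
        · exact absurd hu (Finset.disjoint_right.1 H.h12 hb)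
        · exact absurd hu (Finset.disjoint_right.1 H.h13 hc)
        · exact Or.inr rfl
        · exact absurd hu (Finset.disjoint_right.1 H.h12 hy)
        · exact absurd hu (Finset.disjoint_right.1 H.h13 hz)
      · rintro (rfl|rfl)
        · exact ⟨Or.inl rfl, ha⟩
        · exact ⟨by simp, hx⟩
    show (({a,b,c,x,y,z} : Finset α) ∩ H.V1).card = 2
    rw [he, Finset.card_pair hax]
  · have he : ({a,b,c,x,y,z} : Finset α) ∩ H.V2 = {b,y} := by
      ext u
      simp only [Finset.mem_inter, Finset.mem_insert, Finset.mem_singleton]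
      constructor
      · rintro ⟨(rfl|rfl|rfl|rfl|rfl|rfl), hu⟩
        · exact absurd hu (Finset.disjoint_left.1 H.h12 ha)
        · exact Or.inl rfl
        · exact absurd hu (Finset.disjoint_left.1 H.h23 hu hc).elim
        · exact absurd hu (Finset.disjoint_left.1 H.h12 hx)
        · exact Or.inr rfl
        · exact absurd hu (Finset.disjoint_left.1 H.h23 hu hz).elim
      · rintro (rfl|rfl)
        · exact ⟨by simp, hb⟩
        · exact ⟨by simp, hy⟩
    show (({a,b,c,x,y,z} : Finset α) ∩ H.V2).card = 2
    rw [he, Finset.card_pair hby]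
  · have he : ({a,b,c,x,y,z} : Finset α) ∩ H.V3 = {c,z} := by
      ext u
      simp only [Finset.mem_inter, Finset.mem_insert, Finset.mem_singleton]
      constructor
      · rintro ⟨(rfl|rfl|rfl|rfl|rfl|rfl), hu⟩
        · exact absurd hu (Finset.disjoint_left.1 H.h13 ha)
        · exact absurd hu (Finset.disjoint_left.1 H.h23 hb)
        · exact Or.inl rfl
        · exact absurd hu (Finset.disjoint_left.1 H.h13 hx)
        · exact absurd hu (Finset.disjoint_left.1 H.h23 hy)
        · exact Or.inr rfl
      · rintro (rfl|rfl)
        · exact ⟨by simp, hc⟩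
        · exact ⟨by simp, hz⟩
    show (({a,b,c,x,y,z} : Finset α) ∩ H.V3).card = 2
    rw [he, Finset.card_pair hcz]

lemma cls_subset_verts (H : TriSys α) (m : Fin 3) : H.cls m ⊆ H.verts := by
  fin_cases m
  · exact fun u hu => Finset.mem_union_left _ (Finset.mem_union_left _ hu)
  · exact fun u hu => Finset.mem_union_left _ (Finset.mem_union_right _ hu)
  · exact fun u hu => Finset.mem_union_right _ hu

end Aux2

/-- The `i`-heavy `(i, j)`-cover of a home-base hypergraph is a vertex cover
of size `2ν(H) = τ(H)`, hence a minimum vertex cover. -/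
theorem heavy_cover_is_minimum_cover (H : TriSys α) (P : FRData α)
    (hP : IsHomeBasePartition H P)
    (i j : Fin 3) (hij : i ≠ j)
    (Ci : Finset α) (Ui : Finset (Finset α))
    (hCiEss : EssentialSet H P.Rfam (P.W ∩ H.cls i) Ci)
    (hCiMax : ∀ C, EssentialSet H P.Rfam (P.W ∩ H.cls i) C → C ⊆ Ci)
    (hUiR : Ui ⊆ P.Rfam) (hUicard : Ui.card = Ci.card)
    (hUiN : RNbhd H (P.W ∩ H.cls i) Ui = Ci)
    (T : Finset α)
    (hT : T = (Ci ∪ ((famUnion P.Ffam ∪ famUnion P.Rfam) ∩ H.cls i)) ∪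
      (P.Rfam \ Ui).biUnion (fun R => R ∩ H.cls j)) :
    H.IsCover T ∧ T.card = 2 * H.nu ∧ 2 * H.nu = H.tau := by
  obtain ⟨hFR, hMatch, hEH⟩ := hP
  obtain ⟨hFdisj, hRdisj, hFRdisj, hFW, hRW, hpart, hFano, hRtrip, hnu⟩ := hFR
  have hCi_sub : Ci ⊆ P.W ∩ H.cls i := by
    rw [← hUiN]; exact Finset.filter_subset _ _
  -- Part 1 : cover
  have hcover : H.IsCover T := by
    intro e he
    rcases hEH e he with ⟨A, hA, hsub⟩ | ⟨R, hR, h2⟩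
    · refine ⟨ecoord e i, ?_, ecoord_mem_evset e i⟩
      rw [hT]
      refine Finset.mem_union_left _ (Finset.mem_union_right _ ?_)
      exact Finset.mem_inter.2 ⟨Finset.mem_union_left _
        (mem_famUnion.2 ⟨A, hA, hsub (ecoord_mem_evset e i)⟩), ecoord_mem_cls H he i⟩
    · obtain ⟨r1, hr1, r2, hr2, r3, hr3, hRe⟩ := hRtrip R hR
      by_cases hri : ![r1,r2,r3] i ∈ evset e
      · refine ⟨![r1,r2,r3] i, ?_, hri⟩
        rw [hT]
        refine Finset.mem_union_left _ (Finset.mem_union_right _ ?_)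
        exact Finset.mem_inter.2 ⟨Finset.mem_union_right _
          (mem_famUnion.2 ⟨R, hR, hRe ▸ rvec_mem_triple r1 r2 r3 i⟩),
          rvec_mem_cls H hr1 hr2 hr3 i⟩
      · by_cases hUi : R ∈ Ui
        · -- analyze w = ecoord e i
          set w := ecoord e i with hw
          have hwv : w ∈ H.verts := cls_subset_verts H i (ecoord_mem_cls H he i)
          rw [← hpart] at hwv
          rcases Finset.mem_union.1 hwv with hwv | hwW
          · rcases Finset.mem_union.1 hwv with hwF | hwR
            · refine ⟨w, ?_, ecoord_mem_evset e i⟩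
              rw [hT]
              refine Finset.mem_union_left _ (Finset.mem_union_right _ ?_)
              exact Finset.mem_inter.2 ⟨Finset.mem_union_left _ hwF, ecoord_mem_cls H he i⟩
            · refine ⟨w, ?_, ecoord_mem_evset e i⟩
              rw [hT]
              refine Finset.mem_union_left _ (Finset.mem_union_right _ ?_)
              exact Finset.mem_inter.2 ⟨Finset.mem_union_right _ hwR, ecoord_mem_cls H he i⟩
          · -- w ∈ W : then w ∈ Ci
            refine ⟨w, ?_, ecoord_mem_evset e i⟩
            rw [hT]
            refine Finset.mem_union_left _ (Finset.mem_union_left _ ?_)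
            rw [← hUiN]
            refine Finset.mem_filter.2 ⟨Finset.mem_inter.2 ⟨hwW, ecoord_mem_cls H he i⟩,
              ⟨R, hUi, ⟨e, he, ecoord_mem_evset e i, h2⟩⟩⟩
        · -- R ∉ Ui : use rv j
          have hrj : ![r1,r2,r3] j ∈ evset e := by
            by_contra hrj
            have hle : (evset e ∩ R).card ≤ 1 := by
              have hsub2 : evset e ∩ R ⊆ R \ {![r1,r2,r3] i, ![r1,r2,r3] j} := by
                intro u hu
                rw [Finset.mem_inter] at hu
                rw [Finset.mem_sdiff]
                refine ⟨hu.2, ?_⟩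
                simp only [Finset.mem_insert, Finset.mem_singleton]
                rintro (rfl | rfl)
                · exact hri hu.1
                · exact hrj hu.1
              have hps : ({![r1,r2,r3] i, ![r1,r2,r3] j} : Finset α) ⊆ R := by
                intro u hu
                simp only [Finset.mem_insert, Finset.mem_singleton] at hu
                rcases hu with rfl | rfl <;>
                  exact hRe ▸ rvec_mem_triple r1 r2 r3 _
              calc (evset e ∩ R).card ≤ (R \ {![r1,r2,r3] i, ![r1,r2,r3] j}).card :=
                    Finset.card_le_card hsub2
                _ = R.card - ({![r1,r2,r3] i, ![r1,r2,r3] j} : Finset α).card :=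
                    Finset.card_sdiff_of_subset hps
                _ ≤ 1 := by
                    rw [hRe, triple_card H hr1 hr2 hr3,
                      Finset.card_pair (rvec_ne H hr1 hr2 hr3 hij)]
            omega
          refine ⟨![r1,r2,r3] j, ?_, hrj⟩
          rw [hT]
          refine Finset.mem_union_right _ ?_
          refine Finset.mem_biUnion.2 ⟨R, Finset.mem_sdiff.2 ⟨hR, hUi⟩, ?_⟩
          exact Finset.mem_inter.2 ⟨hRe ▸ rvec_mem_triple r1 r2 r3 j,
            rvec_mem_cls H hr1 hr2 hr3 j⟩
  -- Part 2 : cardinality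
  have hWF : ∀ u ∈ P.W, u ∉ famUnion P.Ffam := by
    intro u hu hF
    obtain ⟨A, hA, huA⟩ := mem_famUnion.1 hF
    exact Finset.disjoint_right.1 (hFW A hA) hu huA
  have hWR : ∀ u ∈ P.W, u ∉ famUnion P.Rfam := by
    intro u hu hF
    obtain ⟨B, hB, huB⟩ := mem_famUnion.1 hF
    exact Finset.disjoint_right.1 (hRW B hB) hu huB
  have hFURU : Disjoint (famUnion P.Ffam ∩ H.cls i) (famUnion P.Rfam ∩ H.cls i) := by
    rw [Finset.disjoint_left]
    intro u huF huR
    obtain ⟨A, hA, huA⟩ := mem_famUnion.1 (Finset.mem_inter.1 huF).1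
    obtain ⟨B, hB, huB⟩ := mem_famUnion.1 (Finset.mem_inter.1 huR).1
    exact Finset.disjoint_left.1 (hFRdisj A hA B hB) huA huB
  have hcard1 : (famUnion P.Ffam ∩ H.cls i).card = 2 * P.Ffam.card := by
    have h1 : famUnion P.Ffam ∩ H.cls i = P.Ffam.biUnion (fun F => F ∩ H.cls i) := by
      ext u
      simp only [famUnion, Finset.mem_inter, Finset.mem_biUnion, id]
      tauto
    rw [h1, Finset.card_biUnion (fun A hA B hB hne =>
      (hFdisj A hA B hB hne).mono Finset.inter_subset_left Finset.inter_subset_left)]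
    rw [Finset.sum_congr rfl (fun F hF => multiFano_inter_card H (hFano F hF) i),
      Finset.sum_const, smul_eq_mul, mul_comm]
  have hcard2 : (famUnion P.Rfam ∩ H.cls i).card = P.Rfam.card := by
    have h1 : famUnion P.Rfam ∩ H.cls i = P.Rfam.biUnion (fun R => R ∩ H.cls i) := by
      ext u
      simp only [famUnion, Finset.mem_inter, Finset.mem_biUnion, id]
      tauto
    rw [h1, Finset.card_biUnion (fun A hA B hB hne =>
      (hRdisj A hA B hB hne).mono Finset.inter_subset_left Finset.inter_subset_left)]
    rw [Finset.sum_congr rfl (fun R hR => ?_), Finset.sum_const, smul_eq_mul, mul_one]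
    obtain ⟨r1, hr1, r2, hr2, r3, hr3, hRe⟩ := hRtrip R hR
    rw [hRe, triple_inter_cls H hr1 hr2 hr3 i, Finset.card_singleton]
  have hcardD : ((P.Rfam \ Ui).biUnion fun R => R ∩ H.cls j).card
      = P.Rfam.card - Ui.card := by
    rw [Finset.card_biUnion (fun A hA B hB hne =>
      (hRdisj A (Finset.mem_sdiff.1 hA).1 B (Finset.mem_sdiff.1 hB).1 hne).mono
        Finset.inter_subset_left Finset.inter_subset_left)]
    rw [Finset.sum_congr rfl (fun R hR => ?_), Finset.sum_const, smul_eq_mul, mul_one,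
      Finset.card_sdiff_of_subset hUiR]
    obtain ⟨r1, hr1, r2, hr2, r3, hr3, hRe⟩ := hRtrip R (Finset.mem_sdiff.1 hR).1
    rw [hRe, triple_inter_cls H hr1 hr2 hr3 j, Finset.card_singleton]
  have hd1 : Disjoint Ci ((famUnion P.Ffam ∪ famUnion P.Rfam) ∩ H.cls i) := by
    rw [Finset.disjoint_left]
    intro u hu hmem
    have huW : u ∈ P.W := (Finset.mem_inter.1 (hCi_sub hu)).1
    rcases Finset.mem_union.1 (Finset.mem_inter.1 hmem).1 with h | h
    · exact hWF u huW h
    · exact hWR u huW h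
  have hd2 : Disjoint (Ci ∪ (famUnion P.Ffam ∪ famUnion P.Rfam) ∩ H.cls i)
      ((P.Rfam \ Ui).biUnion fun R => R ∩ H.cls j) := by
    refine (cls_disjoint H hij).mono ?_ ?_
    · intro u hu
      rcases Finset.mem_union.1 hu with h | h
      · exact (Finset.mem_inter.1 (hCi_sub h)).2
      · exact (Finset.mem_inter.1 h).2
    · intro u hu
      obtain ⟨R, _, huR⟩ := Finset.mem_biUnion.1 hu
      exact (Finset.mem_inter.1 huR).2
  have hcardT : T.card = 2 * H.nu := by
    have hTc : T.card = Ci.card + (2 * P.Ffam.card + P.Rfam.card)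
        + (P.Rfam.card - Ui.card) := by
      rw [hT, Finset.card_union_of_disjoint hd2, Finset.card_union_of_disjoint hd1,
        Finset.union_inter_distrib_right, Finset.card_union_of_disjoint hFURU,
        hcard1, hcard2, hcardD]
    have hUle : Ui.card ≤ P.Rfam.card := Finset.card_le_card hUiR
    omega
  refine ⟨hcover, hcardT, ?_⟩
  -- Part 3 : 2 nu = tau
  choose g hginj hgprop using hMatch
  set S : Finset α → Finset α := fun R => R ∪ {g 0 R, g 1 R, g 2 R} with hS
  have hmemS : ∀ {u : α} {R : Finset α}, u ∈ S R → u ∈ R ∨ ∃ m : Fin 3, u = g m R := by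
    intro u R hu
    rcases Finset.mem_union.1 hu with h | h
    · exact Or.inl h
    · simp only [Finset.mem_insert, Finset.mem_singleton] at h
      rcases h with rfl | rfl | rfl
      exacts [Or.inr ⟨0, rfl⟩, Or.inr ⟨1, rfl⟩, Or.inr ⟨2, rfl⟩]
  have hgW : ∀ (m : Fin 3) (R : Finset α), R ∈ P.Rfam → g m R ∈ P.W :=
    fun m R hR => (Finset.mem_inter.1 (hgprop m R hR).1).1
  have hgcls : ∀ (m : Fin 3) (R : Finset α), R ∈ P.Rfam → g m R ∈ H.cls m :=
    fun m R hR => (Finset.mem_inter.1 (hgprop m R hR).1).2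
  have hgnR : ∀ (m : Fin 3) (R : Finset α), R ∈ P.Rfam → g m R ∉ R :=
    fun m R hR hm => (Finset.disjoint_left.1 (hRW R hR) hm) (hgW m R hR)
  have hlb : ∀ T' : Finset α, H.IsCover T' → 2 * H.nu ≤ T'.card := by
    intro T' hc
    -- each Fano set F contains at least 2 cover vertices
    have hF2 : ∀ F ∈ P.Ffam, 2 ≤ (T' ∩ F).card := by
      intro F hF
      obtain ⟨a, b, c, x, y, z, ha, hx, hb, hy, hc', hz, hax, hby, hcz, hFe, hind⟩ :=
        hFano F hF
      have hEdge : ∀ p ∈ FanoEdges a b c x y z, p ∈ H.edges ∧ evset p ⊆ F := by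
        intro p hp
        rw [← hind, inducedEdges, Multiset.mem_toFinset, Multiset.mem_filter] at hp
        exact hp
      have h1 := hEdge (a, b, c) (by simp [FanoEdges])
      have h2 := hEdge (a, y, z) (by simp [FanoEdges])
      have h3 := hEdge (x, b, z) (by simp [FanoEdges])
      have hab : a ≠ b := fun h => Finset.disjoint_left.1 H.h12 ha (h ▸ hb)
      have haz : a ≠ z := fun h => Finset.disjoint_left.1 H.h13 ha (h ▸ hz)
      have hba : b ≠ a := fun h => hab h.symm
      have hbz : b ≠ z := fun h => Finset.disjoint_left.1 H.h23 hb (h ▸ hz)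
      have hca : c ≠ a := fun h => Finset.disjoint_right.1 H.h13 hc' (h ▸ ha)
      have hcy : c ≠ y := fun h => Finset.disjoint_right.1 H.h23 hc' (h ▸ hy)
      obtain ⟨v, hvT, hv⟩ := hc _ h1.1
      have hvF : v ∈ F := h1.2 hv
      simp only [evset, Finset.mem_insert, Finset.mem_singleton] at hv
      rcases hv with rfl | rfl | rfl
      · -- v = a, use edge (x,b,z)
        obtain ⟨u, huT, hu⟩ := hc _ h3.1
        have huF : u ∈ F := h3.2 hu
        refine Finset.one_lt_card.2 ⟨v, Finset.mem_inter.2 ⟨hvT, hvF⟩, u,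
          Finset.mem_inter.2 ⟨huT, huF⟩, ?_⟩
        simp only [evset, Finset.mem_insert, Finset.mem_singleton] at hu
        rcases hu with rfl | rfl | rfl
        · exact hax
        · exact hab
        · exact haz
      · -- v = b, use edge (a,y,z)
        obtain ⟨u, huT, hu⟩ := hc _ h2.1
        have huF : u ∈ F := h2.2 hu
        refine Finset.one_lt_card.2 ⟨v, Finset.mem_inter.2 ⟨hvT, hvF⟩, u,
          Finset.mem_inter.2 ⟨huT, huF⟩, ?_⟩
        simp only [evset, Finset.mem_insert, Finset.mem_singleton] at hu
        rcases hu with rfl | rfl | rfl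
        · exact hba
        · exact hby
        · exact hbz
      · -- v = c, use edge (a,y,z)
        obtain ⟨u, huT, hu⟩ := hc _ h2.1
        have huF : u ∈ F := h2.2 hu
        refine Finset.one_lt_card.2 ⟨v, Finset.mem_inter.2 ⟨hvT, hvF⟩, u,
          Finset.mem_inter.2 ⟨huT, huF⟩, ?_⟩
        simp only [evset, Finset.mem_insert, Finset.mem_singleton] at hu
        rcases hu with rfl | rfl | rfl
        · exact hca
        · exact hcy
        · exact hcz
    -- each S R contains at least 2 cover vertices
    have hR2 : ∀ R ∈ P.Rfam, 2 ≤ (T' ∩ S R).card := by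
      intro R hR
      obtain ⟨r1, hr1, r2, hr2, r3, hr3, hRe⟩ := hRtrip R hR
      have hE : ∀ m : Fin 3, ∃ e ∈ H.edges, g m R ∈ evset e ∧ 2 ≤ (evset e ∩ R).card :=
        fun m => (hgprop m R hR).2
      choose eF heF hgmem2 hcard2 using hE
      have hsubS : ∀ m : Fin 3, evset (eF m) ⊆ S R := by
        intro m u hu
        by_cases huR : u ∈ R
        · exact Finset.mem_union_left _ huR
        · have hug : u = g m R := nonR_unique H (heF m) (hcard2 m) hu huR
            (hgmem2 m) (hgnR m R hR)
          rw [hug]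
          refine Finset.mem_union_right _ ?_
          fin_cases m <;> simp
      obtain ⟨v0, hv0T, hv0⟩ := hc _ (heF 0)
      obtain ⟨v1, hv1T, hv1⟩ := hc _ (heF 1)
      obtain ⟨v2, hv2T, hv2⟩ := hc _ (heF 2)
      by_cases h01 : v0 = v1
      · by_cases h02 : v0 = v2
        · exfalso
          subst h01; subst h02
          have hvall : ∀ m : Fin 3, v0 ∈ evset (eF m) := by
            intro m; fin_cases m <;> assumption
          have hkey : ∀ m : Fin 3, v0 ∈ H.cls m → v0 = g m R := by
            intro m hm
            have ha1 := eq_ecoord_of_mem_cls H (heF m) (hvall m) hm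
            have ha2 := eq_ecoord_of_mem_cls H (heF m) (hgmem2 m) (hgcls m R hR)
            rw [ha1, ha2]
          by_cases hvR : v0 ∈ R
          · have hcm : ∃ m : Fin 3, v0 ∈ H.cls m := by
              rw [hRe] at hvR
              simp only [Finset.mem_insert, Finset.mem_singleton] at hvR
              rcases hvR with rfl | rfl | rfl
              · exact ⟨0, by simpa [TriSys.cls] using hr1⟩
              · exact ⟨1, by simpa [TriSys.cls] using hr2⟩
              · exact ⟨2, by simpa [TriSys.cls] using hr3⟩
            obtain ⟨m, hm⟩ := hcm
            exact hgnR m R hR ((hkey m hm) ▸ hvR)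
          · have e0 : v0 = g 0 R := nonR_unique H (heF 0) (hcard2 0) (hvall 0) hvR
              (hgmem2 0) (hgnR 0 R hR)
            have e1 : v0 = g 1 R := nonR_unique H (heF 1) (hcard2 1) (hvall 1) hvR
              (hgmem2 1) (hgnR 1 R hR)
            exact Finset.disjoint_left.1 (cls_disjoint H (show (0 : Fin 3) ≠ 1 by decide))
              (e0 ▸ hgcls 0 R hR) (e1 ▸ hgcls 1 R hR)
        · exact Finset.one_lt_card.2 ⟨v0, Finset.mem_inter.2 ⟨hv0T, hsubS 0 hv0⟩,
            v2, Finset.mem_inter.2 ⟨hv2T, hsubS 2 hv2⟩, h02⟩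
      · exact Finset.one_lt_card.2 ⟨v0, Finset.mem_inter.2 ⟨hv0T, hsubS 0 hv0⟩,
          v1, Finset.mem_inter.2 ⟨hv1T, hsubS 1 hv1⟩, h01⟩
    -- disjointness of the S R's
    have hSdisj : ∀ R ∈ P.Rfam, ∀ R' ∈ P.Rfam, R ≠ R' → Disjoint (S R) (S R') := by
      intro R hR R' hR' hne
      rw [Finset.disjoint_left]
      intro u hu hu'
      rcases hmemS hu with huR | ⟨m, rfl⟩
      · rcases hmemS hu' with huR' | ⟨m', he'⟩
        · exact Finset.disjoint_left.1 (hRdisj R hR R' hR' hne) huR huR'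
        · exact (Finset.disjoint_left.1 (hRW R hR) huR) (he' ▸ hgW m' R' hR')
      · rcases hmemS hu' with huR' | ⟨m', he'⟩
        · exact (Finset.disjoint_left.1 (hRW R' hR') huR') (hgW m R hR)
        · rcases eq_or_ne m m' with rfl | hmm
          · exact hne ((hginj m) (Finset.mem_coe.2 hR) (Finset.mem_coe.2 hR') he')
          · exact Finset.disjoint_left.1 (cls_disjoint H hmm) (hgcls m R hR)
              (he' ▸ hgcls m' R' hR')
    have hbF : (P.Ffam.biUnion fun F => T' ∩ F).card = ∑ F ∈ P.Ffam, (T' ∩ F).card :=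
      Finset.card_biUnion (fun A hA B hB hne => (hFdisj A hA B hB hne).mono
        Finset.inter_subset_right Finset.inter_subset_right)
    have hbR : (P.Rfam.biUnion fun R => T' ∩ S R).card
        = ∑ R ∈ P.Rfam, (T' ∩ S R).card :=
      Finset.card_biUnion (fun A hA B hB hne => (hSdisj A hA B hB hne).mono
        Finset.inter_subset_right Finset.inter_subset_right)
    have hUdisj : Disjoint (P.Ffam.biUnion fun F => T' ∩ F)
        (P.Rfam.biUnion fun R => T' ∩ S R) := by
      rw [Finset.disjoint_left]
      intro u huF huR
      obtain ⟨A, hA, huA⟩ := Finset.mem_biUnion.1 huF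
      obtain ⟨R, hR, huSR⟩ := Finset.mem_biUnion.1 huR
      have huA' : u ∈ A := (Finset.mem_inter.1 huA).2
      rcases hmemS (Finset.mem_inter.1 huSR).2 with h | ⟨m, rfl⟩
      · exact Finset.disjoint_left.1 (hFRdisj A hA R hR) huA' h
      · exact (Finset.disjoint_left.1 (hFW A hA) huA') (hgW m R hR)
    calc 2 * H.nu = ∑ _F ∈ P.Ffam, 2 + ∑ _R ∈ P.Rfam, 2 := by
          rw [Finset.sum_const, Finset.sum_const, smul_eq_mul, smul_eq_mul, ← hnu]; ring
      _ ≤ ∑ F ∈ P.Ffam, (T' ∩ F).card + ∑ R ∈ P.Rfam, (T' ∩ S R).card :=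
          add_le_add (Finset.sum_le_sum hF2) (Finset.sum_le_sum hR2)
      _ = ((P.Ffam.biUnion fun F => T' ∩ F) ∪ (P.Rfam.biUnion fun R => T' ∩ S R)).card := by
          rw [Finset.card_union_of_disjoint hUdisj, hbF, hbR]
      _ ≤ T'.card := by
          refine Finset.card_le_card ?_
          refine Finset.union_subset ?_ ?_ <;>
            exact Finset.biUnion_subset.2 fun A _ => Finset.inter_subset_left
  have hmem : 2 * H.nu ∈ {n : ℕ | ∃ T0 : Finset α, H.IsCover T0 ∧ T0.card = n} :=
    ⟨T, hcover, hcardT⟩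
  refine le_antisymm ?_ (Nat.sInf_le hmem)
  refine le_csInf ⟨_, hmem⟩ ?_
  rintro n ⟨T0, hc0, rfl⟩
  exact hlb T0 hc0
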